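/- Tent-map perturbation identity: for w, ε with 1/4 ≤ w−ε and w+ε ≤ 3/4, define the perturbation g_{w,ε}(v,m) = (16/9)·( 1_{R¹∪R⁴}(v,m) − 1_{R²∪R³}(v,m) ), where R¹ = [15/16,1]×[w−ε,w), R² = [15/16,1]×[w,w+ε), R³ = [7/8,15/16)×[w−ε,w), R⁴ = [7/8,15/16)×[w,w+ε). Then ∫_{[0,1]²} g_{w,ε} = 0, and for every b ∈ [0,1]: ∫_{[0,1]²} (v−b)·1{m ≤ b}·g_{w,ε}(v,m) dv dm = (ε/144)·Λ_{w,ε}(b), where Λ_{w,ε}(b) = max{1 − |b−w|/ε, 0} is the tent map centered at w with radius ε. -/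

import Mathlib

open MeasureTheory

section TentHelpers

open Set

open intervalIntegral in
private lemma tent_int_sub (a c b : ℝ) (h : a ≤ c) :
    ∫ x in Set.Ioc a c, (x - b) = (c^2 - a^2)/2 - b*(c-a) := by
  rw [← integral_of_le h,
    intervalIntegral.integral_sub intervalIntegrable_id (_root_.intervalIntegrable_const),
    integral_id, intervalIntegral.integral_const, smul_eq_mul]
  ring

private lemma tent_vInt_Icc (a c b : ℝ) (h : a ≤ c) (h0 : 0 ≤ a) (h1 : c ≤ 1) :
    ∫ x in Icc (0:ℝ) 1, (x - b) * (if x ∈ Icc a c then 1 else 0)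
      = (c^2 - a^2)/2 - b*(c-a) := by
  have key : ∀ x, (x - b) * (if x ∈ Icc a c then (1:ℝ) else 0)
      = (Icc a c).indicator (fun x => x - b) x := by
    intro x; by_cases hx : x ∈ Icc a c <;> simp [indicator, hx]
  simp_rw [key]
  rw [setIntegral_indicator measurableSet_Icc,
    inter_eq_self_of_subset_right (Icc_subset_Icc h0 h1),
    integral_Icc_eq_integral_Ioc, tent_int_sub _ _ _ h]

private lemma tent_vInt_Ico (a c b : ℝ) (h : a ≤ c) (h0 : 0 ≤ a) (h1 : c ≤ 1) :
    ∫ x in Icc (0:ℝ) 1, (x - b) * (if x ∈ Ico a c then 1 else 0)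
      = (c^2 - a^2)/2 - b*(c-a) := by
  have key : ∀ x, (x - b) * (if x ∈ Ico a c then (1:ℝ) else 0)
      = (Ico a c).indicator (fun x => x - b) x := by
    intro x; by_cases hx : x ∈ Ico a c <;> simp [indicator, hx]
  have hsub : Ico a c ⊆ Icc (0:ℝ) 1 :=
    fun x hx => mem_Icc.mpr ⟨le_trans h0 hx.1, le_trans hx.2.le h1⟩
  simp_rw [key]
  rw [setIntegral_indicator measurableSet_Ico,
    inter_eq_self_of_subset_right hsub,
    integral_Ico_eq_integral_Ioo, ← integral_Ioc_eq_integral_Ioo, tent_int_sub _ _ _ h]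

private lemma tent_mInt (a c b : ℝ) (h : a ≤ c) (h0 : 0 ≤ a) (h1 : c ≤ 1) :
    ∫ y in Icc (0:ℝ) 1, (if y ≤ b then (1:ℝ) else 0) * (if y ∈ Ico a c then 1 else 0)
      = max (min c b - a) 0 := by
  have key : ∀ y, (if y ≤ b then (1:ℝ) else 0) * (if y ∈ Ico a c then (1:ℝ) else 0)
      = (Ico a c ∩ Iic b).indicator (fun _ => (1:ℝ)) y := by
    intro y
    by_cases hy : y ≤ b <;> by_cases hy2 : y ∈ Ico a c <;>
      simp [indicator, hy, hy2, mem_Iic]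
  have hsub : Ico a c ∩ Iic b ⊆ Icc (0:ℝ) 1 :=
    fun y hy => mem_Icc.mpr ⟨le_trans h0 hy.1.1, le_trans hy.1.2.le h1⟩
  simp_rw [key]
  rw [setIntegral_indicator (measurableSet_Ico.inter measurableSet_Iic),
    inter_eq_self_of_subset_right hsub,
    setIntegral_const, smul_eq_mul, mul_one, measureReal_def]
  rcases le_or_gt c b with hcb | hbc
  · have hsub2 : Ico a c ⊆ Iic b := fun y hy => mem_Iic.mpr (le_trans hy.2.le hcb)
    rw [inter_eq_self_of_subset_left hsub2,
      Real.volume_Ico, ENNReal.toReal_ofReal (by linarith : (0:ℝ) ≤ c - a),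
      min_eq_left hcb, max_eq_left (by linarith)]
  · rcases le_or_gt a b with hab | hba
    · have hset : Ico a c ∩ Iic b = Icc a b := by
        ext y
        simp only [mem_inter_iff, mem_Ico, mem_Iic, mem_Icc]
        constructor
        · rintro ⟨⟨h1, h2⟩, h3⟩; exact ⟨h1, h3⟩
        · rintro ⟨h1, h2⟩; exact ⟨⟨h1, lt_of_le_of_lt h2 hbc⟩, h2⟩
      rw [hset, Real.volume_Icc, ENNReal.toReal_ofReal (by linarith : (0:ℝ) ≤ b - a),
        min_eq_right hbc.le, max_eq_left (by linarith)]
    · have hset : Ico a c ∩ Iic b = ∅ := by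
        ext y
        simp only [mem_inter_iff, mem_Ico, mem_Iic, mem_empty_iff_false, iff_false]
        rintro ⟨⟨h1, h2⟩, h3⟩; linarith
      rw [hset, measure_empty, ENNReal.toReal_zero,
        min_eq_right (by linarith : b ≤ c), max_eq_right (by linarith)]

private lemma tent_mInt_const (a c : ℝ) (h : a ≤ c) (h0 : 0 ≤ a) (h1 : c ≤ 1) :
    ∫ y in Icc (0:ℝ) 1, (if y ∈ Ico a c then (1:ℝ) else 0) = c - a := by
  have key : ∀ y, (if y ∈ Ico a c then (1:ℝ) else 0)
      = (Ico a c).indicator (fun _ => (1:ℝ)) y := by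
    intro y; by_cases hy : y ∈ Ico a c <;> simp [indicator, hy]
  have hsub : Ico a c ⊆ Icc (0:ℝ) 1 :=
    fun y hy => mem_Icc.mpr ⟨le_trans h0 hy.1, le_trans hy.2.le h1⟩
  simp_rw [key]
  rw [setIntegral_indicator measurableSet_Ico,
    inter_eq_self_of_subset_right hsub,
    setIntegral_const, smul_eq_mul, mul_one, measureReal_def, Real.volume_Ico,
    ENNReal.toReal_ofReal (by linarith : (0:ℝ) ≤ c - a)]

private lemma tent_vInt_const_Icc (a c : ℝ) (h : a ≤ c) (h0 : 0 ≤ a) (h1 : c ≤ 1) :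
    ∫ x in Icc (0:ℝ) 1, (if x ∈ Icc a c then (1:ℝ) else 0) = c - a := by
  have key : ∀ x, (if x ∈ Icc a c then (1:ℝ) else 0)
      = (Icc a c).indicator (fun _ => (1:ℝ)) x := by
    intro x; by_cases hx : x ∈ Icc a c <;> simp [indicator, hx]
  simp_rw [key]
  rw [setIntegral_indicator measurableSet_Icc,
    inter_eq_self_of_subset_right (Icc_subset_Icc h0 h1),
    setIntegral_const, smul_eq_mul, mul_one, measureReal_def, Real.volume_Icc,
    ENNReal.toReal_ofReal (by linarith : (0:ℝ) ≤ c - a)]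

private lemma tent_split4 (F₁ F₂ G₁ G₂ : ℝ → ℝ)
    (h1 : IntegrableOn F₁ (Icc 0 1)) (h2 : IntegrableOn F₂ (Icc 0 1))
    (h3 : IntegrableOn G₁ (Icc 0 1)) (h4 : IntegrableOn G₂ (Icc 0 1)) :
    ∫ p in Icc (0:ℝ) 1 ×ˢ Icc (0:ℝ) 1,
      (16/9 : ℝ) * (F₁ p.1 * G₁ p.2 + F₂ p.1 * G₂ p.2
        - F₁ p.1 * G₂ p.2 - F₂ p.1 * G₁ p.2)
    = (16/9 : ℝ) * ((∫ x in Icc (0:ℝ) 1, F₁ x) * (∫ y in Icc (0:ℝ) 1, G₁ y)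
        + (∫ x in Icc (0:ℝ) 1, F₂ x) * (∫ y in Icc (0:ℝ) 1, G₂ y)
        - (∫ x in Icc (0:ℝ) 1, F₁ x) * (∫ y in Icc (0:ℝ) 1, G₂ y)
        - (∫ x in Icc (0:ℝ) 1, F₂ x) * (∫ y in Icc (0:ℝ) 1, G₁ y)) := by
  rw [Measure.volume_eq_prod, ← Measure.prod_restrict]
  rw [integral_const_mul]
  congr 1
  rw [integral_sub, integral_sub, integral_add]
  · rw [integral_prod_mul, integral_prod_mul, integral_prod_mul, integral_prod_mul]
  · exact h1.mul_prod h3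
  · exact h2.mul_prod h4
  · exact (h1.mul_prod h3).add (h2.mul_prod h4)
  · exact h1.mul_prod h4
  · exact ((h1.mul_prod h3).add (h2.mul_prod h4)).sub (h1.mul_prod h4)
  · exact h2.mul_prod h3

private lemma tent_alg (w ε b : ℝ) (hε : 0 < ε) :
    max (min w b - (w - ε)) 0 - max (min (w + ε) b - w) 0
      = ε * max (1 - |b - w| / ε) 0 := by
  rcases le_total b w with hbw | hwb
  · rw [min_eq_right hbw, min_eq_right (by linarith), abs_of_nonpos (by linarith)]
    rcases le_total (w - b) ε with h | h
    · rw [max_eq_left (by linarith), max_eq_right (by linarith),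
        max_eq_left (by rw [sub_nonneg, div_le_one hε]; linarith)]
      field_simp
      try ring
    · rw [max_eq_right (by linarith), max_eq_right (by linarith),
        max_eq_right (by rw [sub_nonpos, le_div_iff₀ hε]; linarith)]
      ring
  · rw [min_eq_left hwb, abs_of_nonneg (by linarith),
      max_eq_left (by linarith : (0:ℝ) ≤ w - (w - ε))]
    rcases le_total b (w + ε) with h | h
    · rw [min_eq_right h, max_eq_left (by linarith),
        max_eq_left (by rw [sub_nonneg, div_le_one hε]; linarith)]
      field_simp
      try ring
    · rw [min_eq_left h, max_eq_left (by linarith),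
        max_eq_right (by rw [sub_nonpos, le_div_iff₀ hε]; linarith)]
      ring

private lemma tent_gdecomp (w ε : ℝ) (p : ℝ × ℝ) :
    ((if (p.1 ∈ Set.Icc (15/16:ℝ) 1 ∧ p.2 ∈ Set.Ico (w - ε) w)
          ∨ (p.1 ∈ Set.Ico (7/8:ℝ) (15/16) ∧ p.2 ∈ Set.Ico w (w + ε))
       then (1:ℝ) else 0)
    - (if (p.1 ∈ Set.Icc (15/16:ℝ) 1 ∧ p.2 ∈ Set.Ico w (w + ε))
          ∨ (p.1 ∈ Set.Ico (7/8:ℝ) (15/16) ∧ p.2 ∈ Set.Ico (w - ε) w)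
       then (1:ℝ) else 0))
    = (if p.1 ∈ Set.Icc (15/16:ℝ) 1 then (1:ℝ) else 0)
        * (if p.2 ∈ Set.Ico (w - ε) w then (1:ℝ) else 0)
      + (if p.1 ∈ Set.Ico (7/8:ℝ) (15/16) then (1:ℝ) else 0)
        * (if p.2 ∈ Set.Ico w (w + ε) then (1:ℝ) else 0)
      - (if p.1 ∈ Set.Icc (15/16:ℝ) 1 then (1:ℝ) else 0)
        * (if p.2 ∈ Set.Ico w (w + ε) then (1:ℝ) else 0)
      - (if p.1 ∈ Set.Ico (7/8:ℝ) (15/16) then (1:ℝ) else 0)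
        * (if p.2 ∈ Set.Ico (w - ε) w then (1:ℝ) else 0) := by
  by_cases hA : p.1 ∈ Set.Icc (15/16:ℝ) 1 <;>
  by_cases hB : p.1 ∈ Set.Ico (7/8:ℝ) (15/16) <;>
  by_cases hC : p.2 ∈ Set.Ico (w - ε) w <;>
  by_cases hD : p.2 ∈ Set.Ico w (w + ε) <;>
  simp [hA, hB, hC, hD]

private lemma tent_const_int : IntegrableOn (fun _ => (1:ℝ)) (Icc (0:ℝ) 1) :=
  (integrableOn_const_iff (C := (1:ℝ))).mpr (Or.inr (by rw [Real.volume_Icc]; exact ENNReal.ofReal_lt_top))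

private lemma tent_int_Icc (a c : ℝ) (f : ℝ → ℝ)
    (hf : IntegrableOn f (Icc (0:ℝ) 1)) :
    IntegrableOn (fun x => f x * (if x ∈ Icc a c then (1:ℝ) else 0)) (Icc (0:ℝ) 1) := by
  have : (fun x => f x * (if x ∈ Icc a c then (1:ℝ) else 0)) = (Icc a c).indicator f := by
    ext x; by_cases h : x ∈ Icc a c <;> simp [indicator, h]
  rw [this]; exact hf.indicator measurableSet_Icc

private lemma tent_int_Ico (a c : ℝ) (f : ℝ → ℝ)
    (hf : IntegrableOn f (Icc (0:ℝ) 1)) :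
    IntegrableOn (fun x => f x * (if x ∈ Ico a c then (1:ℝ) else 0)) (Icc (0:ℝ) 1) := by
  have : (fun x => f x * (if x ∈ Ico a c then (1:ℝ) else 0)) = (Ico a c).indicator f := by
    ext x; by_cases h : x ∈ Ico a c <;> simp [indicator, h]
  rw [this]; exact hf.indicator measurableSet_Ico

private lemma tent_int1_Icc (a c : ℝ) :
    IntegrableOn (fun x => (if x ∈ Icc a c then (1:ℝ) else 0)) (Icc (0:ℝ) 1) := by
  have : (fun x => (if x ∈ Icc a c then (1:ℝ) else 0)) = (Icc a c).indicator (fun _ => 1) := by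
    ext x; by_cases h : x ∈ Icc a c <;> simp [indicator, h]
  rw [this]; exact tent_const_int.indicator measurableSet_Icc

private lemma tent_int1_Ico (a c : ℝ) :
    IntegrableOn (fun x => (if x ∈ Ico a c then (1:ℝ) else 0)) (Icc (0:ℝ) 1) := by
  have : (fun x => (if x ∈ Ico a c then (1:ℝ) else 0)) = (Ico a c).indicator (fun _ => 1) := by
    ext x; by_cases h : x ∈ Ico a c <;> simp [indicator, h]
  rw [this]; exact tent_const_int.indicator measurableSet_Ico

private lemma tent_int_le (b : ℝ) :
    IntegrableOn (fun y => (if y ≤ b then (1:ℝ) else 0)) (Icc (0:ℝ) 1) := by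
  have : (fun y => (if y ≤ b then (1:ℝ) else 0)) = (Iic b).indicator (fun _ => 1) := by
    ext y; by_cases h : y ≤ b <;> simp [indicator, mem_Iic, h]
  rw [this]; exact tent_const_int.indicator measurableSet_Iic

end TentHelpers

/-- Tent-map perturbation identity: the perturbation g_{w,ε} has zero total mass
and shifts the expected utility of bid b by exactly (ε/144)·Λ_{w,ε}(b). -/
theorem stmt_19 (w ε : ℝ) (hε : 0 < ε) (hl : 1/4 ≤ w - ε) (hr : w + ε ≤ 3/4)
    (g : ℝ × ℝ → ℝ)
    (hg : ∀ p : ℝ × ℝ, g p =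
      (16/9) * ((if (p.1 ∈ Set.Icc (15/16:ℝ) 1 ∧ p.2 ∈ Set.Ico (w - ε) w)
                    ∨ (p.1 ∈ Set.Ico (7/8:ℝ) (15/16) ∧ p.2 ∈ Set.Ico w (w + ε))
                 then 1 else 0)
              - (if (p.1 ∈ Set.Icc (15/16:ℝ) 1 ∧ p.2 ∈ Set.Ico w (w + ε))
                    ∨ (p.1 ∈ Set.Ico (7/8:ℝ) (15/16) ∧ p.2 ∈ Set.Ico (w - ε) w)
                 then 1 else 0))) :
    (∫ p in Set.Icc (0:ℝ) 1 ×ˢ Set.Icc (0:ℝ) 1, g p) = 0 ∧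
    ∀ b ∈ Set.Icc (0:ℝ) 1,
      (∫ p in Set.Icc (0:ℝ) 1 ×ˢ Set.Icc (0:ℝ) 1,
          (p.1 - b) * (if p.2 ≤ b then 1 else 0) * g p)
        = (ε / 144) * max (1 - |b - w| / ε) 0 := by
  have h0 : (0:ℝ) ≤ w - ε := by linarith
  have h1 : w ≤ 1 := by linarith
  have h2 : w + ε ≤ 1 := by linarith
  have hwe : w - ε ≤ w := by linarith
  have hwe2 : w ≤ w + ε := by linarith
  constructor
  · have key : (∫ p in Set.Icc (0:ℝ) 1 ×ˢ Set.Icc (0:ℝ) 1, g p)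
        = ∫ p in Set.Icc (0:ℝ) 1 ×ˢ Set.Icc (0:ℝ) 1,
            (16/9 : ℝ) *
              ((fun x => if x ∈ Set.Icc (15/16:ℝ) 1 then (1:ℝ) else 0) p.1
                  * (fun y => if y ∈ Set.Ico (w - ε) w then (1:ℝ) else 0) p.2
                + (fun x => if x ∈ Set.Ico (7/8:ℝ) (15/16) then (1:ℝ) else 0) p.1
                  * (fun y => if y ∈ Set.Ico w (w + ε) then (1:ℝ) else 0) p.2
                - (fun x => if x ∈ Set.Icc (15/16:ℝ) 1 then (1:ℝ) else 0) p.1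
                  * (fun y => if y ∈ Set.Ico w (w + ε) then (1:ℝ) else 0) p.2
                - (fun x => if x ∈ Set.Ico (7/8:ℝ) (15/16) then (1:ℝ) else 0) p.1
                  * (fun y => if y ∈ Set.Ico (w - ε) w then (1:ℝ) else 0) p.2) := by
      refine integral_congr_ae (Filter.Eventually.of_forall fun p => ?_)
      rw [hg p, tent_gdecomp w ε p]
    rw [key]
    beta_reduce
    rw [tent_split4 _ _ _ _
        (tent_int1_Icc _ _) (tent_int1_Ico _ _)
        (tent_int1_Ico _ _) (tent_int1_Ico _ _)]
    rw [tent_vInt_const_Icc (15/16) 1 (by norm_num) (by norm_num) le_rfl,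
      tent_mInt_const (w - ε) w hwe h0 h1,
      tent_mInt_const w (w + ε) hwe2 (by linarith) h2]
    have hv : ∫ x in Set.Icc (0:ℝ) 1,
        (if x ∈ Set.Ico (7/8:ℝ) (15/16) then (1:ℝ) else 0) = 15/16 - 7/8 := by
      have := tent_mInt_const (7/8 : ℝ) (15/16) (by norm_num) (by norm_num) (by norm_num)
      simpa using this
    rw [hv]
    ring
  · intro b hb
    have key : (∫ p in Set.Icc (0:ℝ) 1 ×ˢ Set.Icc (0:ℝ) 1,
          (p.1 - b) * (if p.2 ≤ b then 1 else 0) * g p)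
        = ∫ p in Set.Icc (0:ℝ) 1 ×ˢ Set.Icc (0:ℝ) 1,
            (16/9 : ℝ) *
              ((fun x => (x - b) * (if x ∈ Set.Icc (15/16:ℝ) 1 then (1:ℝ) else 0)) p.1
                  * (fun y => (if y ≤ b then (1:ℝ) else 0)
                      * (if y ∈ Set.Ico (w - ε) w then (1:ℝ) else 0)) p.2
                + (fun x => (x - b) * (if x ∈ Set.Ico (7/8:ℝ) (15/16) then (1:ℝ) else 0)) p.1
                  * (fun y => (if y ≤ b then (1:ℝ) else 0)
                      * (if y ∈ Set.Ico w (w + ε) then (1:ℝ) else 0)) p.2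
                - (fun x => (x - b) * (if x ∈ Set.Icc (15/16:ℝ) 1 then (1:ℝ) else 0)) p.1
                  * (fun y => (if y ≤ b then (1:ℝ) else 0)
                      * (if y ∈ Set.Ico w (w + ε) then (1:ℝ) else 0)) p.2
                - (fun x => (x - b) * (if x ∈ Set.Ico (7/8:ℝ) (15/16) then (1:ℝ) else 0)) p.1
                  * (fun y => (if y ≤ b then (1:ℝ) else 0)
                      * (if y ∈ Set.Ico (w - ε) w then (1:ℝ) else 0)) p.2) := by
      refine integral_congr_ae (Filter.Eventually.of_forall fun p => ?_)
      beta_reduce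
      rw [hg p, tent_gdecomp w ε p]
      ring
    have hxb : IntegrableOn (fun x : ℝ => x - b) (Set.Icc (0:ℝ) 1) :=
      (continuous_id.sub continuous_const).integrableOn_Icc
    have hyb : IntegrableOn (fun y : ℝ => if y ≤ b then (1:ℝ) else 0) (Set.Icc (0:ℝ) 1) :=
      tent_int_le b
    rw [key]
    beta_reduce
    rw [tent_split4 _ _ _ _
        (tent_int_Icc _ _ _ hxb) (tent_int_Ico _ _ _ hxb)
        (tent_int_Ico _ _ _ hyb) (tent_int_Ico _ _ _ hyb)]
    rw [tent_vInt_Icc (15/16) 1 b (by norm_num) (by norm_num) le_rfl,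
      tent_mInt (w - ε) w b hwe h0 h1,
      tent_mInt w (w + ε) b hwe2 (by linarith) h2]
    have hv : ∫ x in Set.Icc (0:ℝ) 1,
        (x - b) * (if x ∈ Set.Ico (7/8:ℝ) (15/16) then (1:ℝ) else 0)
        = ((15/16:ℝ)^2 - (7/8)^2)/2 - b*(15/16 - 7/8) :=
      tent_vInt_Ico (7/8) (15/16) b (by norm_num) (by norm_num) (by norm_num)
    rw [hv]
    linear_combination (1/144 : ℝ) * tent_alg w ε b hε
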